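/- Let K be an invertible 3×3 real matrix whose third row is (0,0,1), D = diag(1,1,−1), C = K⁻ᵀ D K⁻¹, S = K D K⁻¹. Let x₁ ≠ x₂ be affine image points in ℝ² with lifts x̂₁, x̂₂, let θ be the angle between the rays K⁻¹x̂₁, K⁻¹x̂₂, and let l₁ = C S x̂₁, l₂ = C S x̂₂ be their reflected polars. Suppose the line through x₁ and x₂ meets l₁ at a point x₁′ and meets l₂ at a point x₂′. Then cos²θ = (‖x₂ − x₁′‖ · ‖x₁ − x₂′‖) / (‖x₁ − x₁′‖ · ‖x₂ − x₂′‖), the cross-ratio of the collinear points x₁, x₂, x₁′, x₂′. -/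

import Mathlib

open Matrix

/-- The homogeneous lift `(y₁, y₂, 1)` of an affine image point `y ∈ ℝ²`. -/
def homLift (y : EuclideanSpace ℝ (Fin 2)) : Fin 3 → ℝ := ![y 0, y 1, 1]

/-- Cross-ratio form of the angle formula: if the line through `x₁, x₂` meets the
reflected polars `l₁ = C S x̂₁` and `l₂ = C S x̂₂` at `x₁′` and `x₂′` respectively,
then `cos²θ = (|x₂x₁′|·|x₁x₂′|)/(|x₁x₁′|·|x₂x₂′|)`. -/
theorem cos_sq_angle_eq_cross_ratio (K : Matrix (Fin 3) (Fin 3) ℝ)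
    (hK : IsUnit K.det) (hKrow : K 2 = ![0, 0, 1])
    (D C S : Matrix (Fin 3) (Fin 3) ℝ)
    (hD : D = Matrix.diagonal ![1, 1, -1])
    (hC : C = (Kᵀ)⁻¹ * D * K⁻¹)
    (hS : S = K * D * K⁻¹)
    (x₁ x₂ x₁' x₂' : EuclideanSpace ℝ (Fin 2)) (hx : x₁ ≠ x₂)
    (l₁ l₂ : Fin 3 → ℝ)
    (hl₁ : l₁ = C.mulVec (S.mulVec (homLift x₁)))
    (hl₂ : l₂ = C.mulVec (S.mulVec (homLift x₂)))
    (hx₁'mem : ∃ t : ℝ, x₁' = x₁ + t • (x₂ - x₁))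
    (hx₁'on : l₁ ⬝ᵥ homLift x₁' = 0)
    (hx₂'mem : ∃ t : ℝ, x₂' = x₁ + t • (x₂ - x₁))
    (hx₂'on : l₂ ⬝ᵥ homLift x₂' = 0)
    (θ : ℝ)
    (hθ : θ = InnerProductGeometry.angle
        ((WithLp.equiv 2 (Fin 3 → ℝ)).symm (K⁻¹.mulVec (homLift x₁)))
        ((WithLp.equiv 2 (Fin 3 → ℝ)).symm (K⁻¹.mulVec (homLift x₂)))) :
    Real.cos θ ^ 2 =
      (‖x₂ - x₁'‖ * ‖x₁ - x₂'‖) / (‖x₁ - x₁'‖ * ‖x₂ - x₂'‖) := by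
  obtain ⟨t₁, ht₁⟩ := hx₁'mem
  obtain ⟨t₂, ht₂⟩ := hx₂'mem
  set u : Fin 3 → ℝ := K⁻¹.mulVec (homLift x₁) with hu
  set v : Fin 3 → ℝ := K⁻¹.mulVec (homLift x₂) with hv
  set a : ℝ := u ⬝ᵥ u with ha
  set b : ℝ := v ⬝ᵥ v with hb
  set c : ℝ := u ⬝ᵥ v with hc
  -- D * D = 1
  have hDD : D * D = 1 := by
    subst hD
    ext i j
    fin_cases i <;> fin_cases j <;>
      simp [Matrix.mul_apply, Fin.sum_univ_three, Matrix.diagonal, Matrix.one_apply]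
  have hKK : K⁻¹ * K = 1 := nonsing_inv_mul K hK
  have hCS : C * S = (K⁻¹)ᵀ * K⁻¹ := by
    rw [hC, hS, ← Matrix.transpose_nonsing_inv]
    simp only [Matrix.mul_assoc]
    rw [← Matrix.mul_assoc K⁻¹ K, hKK, Matrix.one_mul, ← Matrix.mul_assoc D D, hDD,
      Matrix.one_mul]
  -- lifting the line
  have hlift : ∀ t : ℝ, homLift (x₁ + t • (x₂ - x₁))
      = homLift x₁ + t • (homLift x₂ - homLift x₁) := by
    intro t
    funext i
    fin_cases i <;>
      simp [homLift, PiLp.add_apply, PiLp.smul_apply, PiLp.sub_apply] <;> ring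
  -- dot product identity for polars
  have key : ∀ (p w : Fin 3 → ℝ),
      (C * S).mulVec p ⬝ᵥ w = (K⁻¹.mulVec p) ⬝ᵥ (K⁻¹.mulVec w) := by
    intro p w
    rw [hCS, ← Matrix.mulVec_mulVec, Matrix.mulVec_transpose, ← Matrix.dotProduct_mulVec]
  -- on-line equations
  have heq1 : a + t₁ * (c - a) = 0 := by
    have h := hx₁'on
    rw [hl₁, Matrix.mulVec_mulVec, ht₁, hlift, key] at h
    rw [Matrix.mulVec_add, Matrix.mulVec_smul, Matrix.mulVec_sub] at h
    rw [dotProduct_add, dotProduct_smul, dotProduct_sub] at h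
    simpa [← hu, ← hv, ← ha, ← hc, smul_eq_mul] using h
  have heq2 : c + t₂ * (b - c) = 0 := by
    have h := hx₂'on
    rw [hl₂, Matrix.mulVec_mulVec, ht₂, hlift, key] at h
    rw [Matrix.mulVec_add, Matrix.mulVec_smul, Matrix.mulVec_sub] at h
    rw [dotProduct_add, dotProduct_smul, dotProduct_sub] at h
    rw [show v ⬝ᵥ u = c from dotProduct_comm v u] at h
    simpa [← hu, ← hv, ← hb, ← hc, smul_eq_mul] using h
  -- positivity
  have hufun : ∀ y : EuclideanSpace ℝ (Fin 2), K⁻¹.mulVec (homLift y) ≠ 0 := by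
    intro y hy
    have h1 : K.mulVec (K⁻¹.mulVec (homLift y)) = homLift y := by
      rw [Matrix.mulVec_mulVec, mul_nonsing_inv K hK, Matrix.one_mulVec]
    rw [hy] at h1
    have := congrFun h1 2
    simp [homLift, Matrix.mulVec_zero] at this
  have hdpos : ∀ w : Fin 3 → ℝ, w ≠ 0 → 0 < w ⬝ᵥ w := by
    intro w hw
    rcases lt_or_eq_of_le (Finset.sum_nonneg fun i _ => mul_self_nonneg (w i) :
        (0:ℝ) ≤ w ⬝ᵥ w) with h | h
    · exact h
    · exact absurd (dotProduct_self_eq_zero.mp h.symm) hw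
  have hapos : 0 < a := hdpos u (hufun x₁)
  have hbpos : 0 < b := hdpos v (hufun x₂)
  have hd : (0:ℝ) < ‖x₂ - x₁‖ := by
    rw [norm_pos_iff, sub_ne_zero]
    exact fun h => hx h.symm
  set d : ℝ := ‖x₂ - x₁‖ with hdd
  -- nondegeneracy
  have hac : a - c ≠ 0 := by
    intro h
    have : c = a := by linarith
    rw [this] at heq1
    simp at heq1
    linarith
  have hcb : c - b ≠ 0 := by
    intro h
    have : c = b := by linarith
    rw [this] at heq2
    simp at heq2
    linarith
  -- solve for the parameters
  have ht1 : t₁ = a / (a - c) := by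
    rw [eq_div_iff hac]; linarith
  have ht2 : t₂ = c / (c - b) := by
    rw [eq_div_iff hcb]; linarith
  -- cosine squared
  have hinner : ∀ p q : Fin 3 → ℝ,
      (inner ℝ ((WithLp.equiv 2 (Fin 3 → ℝ)).symm p) ((WithLp.equiv 2 (Fin 3 → ℝ)).symm q) : ℝ)
        = p ⬝ᵥ q := by
    intro p q
    simp [PiLp.inner_apply, WithLp.equiv_symm_apply, PiLp.toLp_apply, dotProduct, mul_comm,
      RCLike.inner_apply, conj_trivial]
  have hnU : ‖(WithLp.equiv 2 (Fin 3 → ℝ)).symm u‖ ^ 2 = a := by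
    rw [← real_inner_self_eq_norm_sq, hinner]
  have hnV : ‖(WithLp.equiv 2 (Fin 3 → ℝ)).symm v‖ ^ 2 = b := by
    rw [← real_inner_self_eq_norm_sq, hinner]
  have hcos2 : Real.cos θ ^ 2 = c ^ 2 / (a * b) := by
    rw [hθ, InnerProductGeometry.cos_angle, hinner, div_pow, mul_pow, hnU, hnV]
  -- norms along the line
  have e1 : x₂ - x₁' = (1 - t₁) • (x₂ - x₁) := by
    rw [ht₁]; module
  have e2 : x₁ - x₂' = (-t₂) • (x₂ - x₁) := by
    rw [ht₂]; module
  have e3 : x₁ - x₁' = (-t₁) • (x₂ - x₁) := by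
    rw [ht₁]; module
  have e4 : x₂ - x₂' = (1 - t₂) • (x₂ - x₁) := by
    rw [ht₂]; module
  rw [hcos2, e1, e2, e3, e4, norm_smul, norm_smul, norm_smul, norm_smul,
    Real.norm_eq_abs, Real.norm_eq_abs, Real.norm_eq_abs, Real.norm_eq_abs, ← hdd]
  -- final algebra
  have h1t1 : |1 - t₁| = |c| / |a - c| := by
    rw [ht1, show (1 : ℝ) - a / (a - c) = -c / (a - c) by field_simp; ring, abs_div, abs_neg]
  have ht1a : |t₁| = a / |a - c| := by
    rw [ht1, abs_div, abs_of_pos hapos]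
  have ht2a : |t₂| = |c| / |c - b| := by
    rw [ht2, abs_div]
  have h1t2 : |1 - t₂| = b / |c - b| := by
    rw [ht2, show (1 : ℝ) - c / (c - b) = -b / (c - b) by field_simp; ring, abs_div, abs_neg,
      abs_of_pos hbpos]
  rw [abs_neg, abs_neg, h1t1, ht1a, ht2a, h1t2]
  have hacne : |a - c| ≠ 0 := abs_ne_zero.mpr hac
  have hcbne : |c - b| ≠ 0 := abs_ne_zero.mpr hcb
  have hdne : d ≠ 0 := ne_of_gt hd
  field_simp
  rw [sq_abs]
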